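/- Let 0 < p < 1, let l ≥ 1, and let k be the integer with 2^{k-1} < l ≤ 2^k. Then S_p(m+l) + S_p(m-l) - 2 S_p(m) = l^{p+1} if and only if l = 2^k and m ≡ l (mod 2^{k+1}). -/

import Mathlib

open Finset

/-- Weighted binary digit sum: `s_p(n) = ∑_j 2^{pj} ε_j(n)`. -/
noncomputable def sWeight (p : ℝ) (n : ℕ) : ℝ :=
  ∑ j ∈ Finset.range n, if n.testBit j then (2:ℝ) ^ (p * (j:ℝ)) else 0

/-- `S_p(n) = ∑_{m=0}^{n-1} s_p(m)`. -/
noncomputable def SWeight (p : ℝ) (n : ℕ) : ℝ :=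
  ∑ m ∈ Finset.range n, sWeight p m

lemma sWeight_eq_of_le (p : ℝ) {n N : ℕ} (h : n ≤ N) :
    sWeight p n = ∑ j ∈ Finset.range N, if n.testBit j then (2:ℝ) ^ (p * (j:ℝ)) else 0 := by
  unfold sWeight
  refine Finset.sum_subset (Finset.range_subset_range.2 h) ?_
  intro j hj hj'
  simp only [Finset.mem_range, not_lt] at hj'
  have : n.testBit j = false :=
    Nat.testBit_eq_false_of_lt (lt_of_lt_of_le (Nat.lt_two_pow_self (n := n)) (Nat.pow_le_pow_right (by norm_num) hj'))
  simp [this]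

lemma sWeight_zero (p : ℝ) : sWeight p 0 = 0 := by simp [sWeight]

lemma rpow_succ_cast (p : ℝ) (j : ℕ) : (2:ℝ) ^ (p * ((j+1:ℕ):ℝ)) = 2^p * 2^(p*(j:ℝ)) := by
  rw [show p*((j+1:ℕ):ℝ) = p + p*(j:ℝ) by push_cast; ring, Real.rpow_add (by norm_num)]

lemma sWeight_two_mul (p : ℝ) (n : ℕ) :
    sWeight p (2*n) = 2^p * sWeight p n := by
  rw [sWeight_eq_of_le p (show 2*n ≤ 2*n+1+1 by omega), sWeight_eq_of_le p (show n ≤ 2*n+1 by omega)]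
  rw [Finset.sum_range_succ']
  have h0 : (2*n).testBit 0 = false := by
    simp [Nat.testBit_zero, Nat.mul_mod_right]
  simp only [h0, Bool.false_eq_true, if_false, add_zero, Finset.mul_sum]
  refine Finset.sum_congr rfl ?_
  intro j _
  have ht : (2*n).testBit (j+1) = n.testBit j := by
    rw [Nat.testBit_succ]; congr 1; omega
  rw [ht, rpow_succ_cast]
  by_cases hb : n.testBit j <;> simp [hb]

lemma sWeight_two_mul_add_one (p : ℝ) (n : ℕ) :
    sWeight p (2*n+1) = 2^p * sWeight p n + 1 := by
  rw [sWeight_eq_of_le p (show 2*n+1 ≤ 2*n+1+1 by omega), sWeight_eq_of_le p (show n ≤ 2*n+1 by omega)]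
  rw [Finset.sum_range_succ']
  have h0 : (2*n+1).testBit 0 = true := by
    simp [Nat.testBit_zero]
  simp only [h0, if_true]
  have : (2:ℝ) ^ (p * ((0:ℕ):ℝ)) = 1 := by
    norm_num
  rw [this, Finset.mul_sum]
  congr 1
  refine Finset.sum_congr rfl ?_
  intro j _
  have ht : (2*n+1).testBit (j+1) = n.testBit j := by
    rw [Nat.testBit_succ]; congr 1; omega
  rw [ht, rpow_succ_cast]
  by_cases hb : n.testBit j <;> simp [hb]

lemma SWeight_zero (p : ℝ) : SWeight p 0 = 0 := by simp [SWeight]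

lemma SWeight_succ (p : ℝ) (n : ℕ) : SWeight p (n+1) = SWeight p n + sWeight p n :=
  Finset.sum_range_succ _ n

lemma SWeight_two_mul (p : ℝ) (n : ℕ) :
    SWeight p (2*n) = 2*2^p * SWeight p n + n := by
  induction n with
  | zero => simp [SWeight_zero]
  | succ n ih =>
    have e : 2*(n+1) = (2*n+1)+1 := by ring
    rw [e, SWeight_succ, show 2*n+1 = (2*n)+1 from rfl, SWeight_succ, ih,
      sWeight_two_mul, sWeight_two_mul_add_one, SWeight_succ]
    push_cast
    ring

lemma SWeight_two_mul_add_one (p : ℝ) (n : ℕ) :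
    SWeight p (2*n+1) = 2*2^p * SWeight p n + n + 2^p * sWeight p n := by
  rw [show 2*n+1 = (2*n)+1 from rfl, SWeight_succ, SWeight_two_mul, sWeight_two_mul]

noncomputable def Tf (p : ℝ) (a l : ℕ) : ℝ :=
  SWeight p (a + 2*l) + SWeight p a - 2 * SWeight p (a + l)

lemma sWeight_diff_le (p : ℝ) (hp0 : 0 < p) (hp1 : p < 1) :
    ∀ n : ℕ, sWeight p (n+1) - sWeight p n ≤ 1 ∧
      (sWeight p (n+1) - sWeight p n = 1 ↔ Even n) := by
  have hb1 : (1:ℝ) < 2^p := by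
    rw [show (1:ℝ) = (2:ℝ)^(0:ℝ) by simp]
    exact Real.rpow_lt_rpow_left_iff (by norm_num) |>.2 hp0
  have hb2 : (2:ℝ)^p < 2 := by
    nth_rewrite 2 [show (2:ℝ) = (2:ℝ)^(1:ℝ) by simp]
    exact Real.rpow_lt_rpow_left_iff (by norm_num) |>.2 hp1
  intro n
  induction n using Nat.strong_induction_on with
  | _ n ih =>
    rcases Nat.even_or_odd n with he | ho
    · obtain ⟨u, hu⟩ := he
      have hn : n = 2*u := by omega
      have hv : sWeight p (n+1) - sWeight p n = 1 := by
        rw [hn, sWeight_two_mul_add_one, sWeight_two_mul]; ring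
      exact ⟨le_of_eq hv, by simp only [hv, true_iff]; exact hn ▸ even_two_mul u⟩
    · obtain ⟨u, hu⟩ := ho
      have hlt : u < n := by omega
      obtain ⟨ihle, _⟩ := ih u hlt
      have hval : sWeight p (n+1) - sWeight p n
          = 2^p * (sWeight p (u+1) - sWeight p u) - 1 := by
        rw [hu, show 2*u+1+1 = 2*(u+1) by ring, sWeight_two_mul, sWeight_two_mul_add_one]
        ring
      have hlt1 : sWeight p (n+1) - sWeight p n < 1 := by
        rw [hval]; nlinarith
      refine ⟨le_of_lt hlt1, ?_, ?_⟩
      · intro h; exact absurd h (ne_of_lt hlt1)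
      · intro h
        exact absurd (hu ▸ h : Even (2*u+1)) (by simp [Nat.even_add_one, parity_simps])

lemma TI1 (p : ℝ) (a l : ℕ) : Tf p (2*a) (2*l) = 2*2^p * Tf p a l := by
  unfold Tf
  rw [show 2*a + 2*(2*l) = 2*(a+2*l) by ring, show 2*a+2*l = 2*(a+l) by ring]
  simp only [SWeight_two_mul]
  push_cast; ring

lemma TI2 (p : ℝ) (a l : ℕ) : Tf p (2*a+1) (2*l) = 2^p * (Tf p a l + Tf p (a+1) l) := by
  unfold Tf
  rw [show 2*a+1 + 2*(2*l) = 2*(a+2*l)+1 by ring, show 2*a+1+2*l = 2*(a+l)+1 by ring,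
    show a+1+2*l = (a+2*l)+1 by ring, show a+1+l = (a+l)+1 by ring]
  simp only [SWeight_two_mul_add_one, SWeight_succ, SWeight_two_mul, sWeight_two_mul,
    sWeight_two_mul_add_one]
  push_cast; ring

lemma TI3 (p : ℝ) (a l : ℕ) :
    Tf p (2*a+1) (2*l+1) = 2^p * (Tf p (a+1) l + Tf p a (l+1)) - 1 := by
  unfold Tf
  rw [show 2*a+1 + 2*(2*l+1) = 2*((a+2*l)+1)+1 by ring,
    show 2*a+1+(2*l+1) = 2*((a+l)+1) by ring,
    show a+1+2*l = (a+2*l)+1 by ring, show a+1+l = (a+l)+1 by ring,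
    show a+2*(l+1) = ((a+2*l)+1)+1 by ring,
    show a+(l+1) = (a+l)+1 by ring]
  simp only [SWeight_two_mul_add_one, SWeight_succ, SWeight_two_mul, sWeight_two_mul,
    sWeight_two_mul_add_one]
  push_cast; ring

lemma TI4 (p : ℝ) (c l : ℕ) :
    Tf p (4*c) (2*l+1) = 2^p * (Tf p (2*c) l + Tf p (2*c) (l+1)) + 1 - 2^p := by
  unfold Tf
  rw [show 4*c + 2*(2*l+1) = 2*(2*(c+l)+1) by ring,
    show 4*c+(2*l+1) = 2*((2*c+l))+1 by ring,
    show (4:ℕ)*c = 2*(2*c) by ring,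
    show 2*c+2*l = 2*(c+l) by ring,
    show 2*c+2*(l+1) = 2*((c+l)+1) by ring,
    show 2*c+(l+1) = (2*c+l)+1 by ring]
  simp only [SWeight_two_mul_add_one, SWeight_succ, SWeight_two_mul, sWeight_two_mul,
    sWeight_two_mul_add_one]
  push_cast; ring

lemma TI5 (p : ℝ) (c l : ℕ) :
    Tf p (4*c+2) (2*l+1) = 2^p * (Tf p (2*c) (l+1) + Tf p (2*c+2) l) + 1 - 2^p := by
  unfold Tf
  rw [show 4*c+2 + 2*(2*l+1) = 2*(2*((c+l)+1)) by ring,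
    show 4*c+2+(2*l+1) = 2*((2*c+l)+1)+1 by ring,
    show (4:ℕ)*c+2 = 2*(2*c+1) by ring,
    show 2*c+2*(l+1) = 2*((c+l)+1) by ring,
    show 2*c+(l+1) = (2*c+l)+1 by ring,
    show 2*c+2+2*l = 2*((c+l)+1) by ring,
    show 2*c+2+l = ((2*c+l)+1)+1 by ring,
    show (2:ℕ)*c+2 = 2*(c+1) by ring]
  simp only [SWeight_two_mul_add_one, SWeight_succ, SWeight_two_mul, sWeight_two_mul,
    sWeight_two_mul_add_one]
  push_cast; ring

lemma concave_mid {p : ℝ} (hp0 : 0 < p) (hp1 : p < 1) {x : ℝ} (hx : 0 < x) :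
    x^p + (x+1)^p < 2*(x+1/2)^p := by
  have h := (Real.strictConcaveOn_rpow hp0 hp1).2
    (Set.mem_Ici.2 (le_of_lt hx)) (Set.mem_Ici.2 (by linarith : (0:ℝ) ≤ x+1))
    (by linarith : x ≠ x+1) (by norm_num : (0:ℝ) < 1/2) (by norm_num : (0:ℝ) < 1/2)
    (by norm_num)
  simp only [smul_eq_mul] at h
  have e : (1/2:ℝ)*x + (1/2)*(x+1) = x + 1/2 := by ring
  rw [e] at h
  linarith

lemma g_strict_anti {p : ℝ} (hp0 : 0 < p) (hp1 : p < 1) {x : ℝ} (hx : 1 ≤ x) :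
    x^(p+1) + (x+1)^(p+1) - 2*(x+1/2)^(p+1) < 1 - 2*((1/2:ℝ)^(p+1)) := by
  set q := p + 1 with hq
  have hq1 : (1:ℝ) ≤ q := by simp [hq]; linarith
  set g : ℝ → ℝ := fun y => y^q + (y+1)^q - 2*(y+1/2)^q with hg
  have hd : ∀ y : ℝ, HasDerivAt g (q*y^(q-1) + q*(y+1)^(q-1) - 2*(q*(y+1/2)^(q-1))) y := by
    intro y
    have h1 : HasDerivAt (fun z:ℝ => z^q) (q*y^(q-1)) y :=
      Real.hasDerivAt_rpow_const (Or.inr hq1)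
    have h2 : HasDerivAt (fun z:ℝ => (z+1)^q) (q*(y+1)^(q-1)) y := by
      have hid : HasDerivAt (fun z:ℝ => z+1) 1 y := (hasDerivAt_id y).add_const 1
      have := (Real.hasDerivAt_rpow_const (x := y+1) (p := q) (Or.inr hq1)).comp y hid
      simpa [Function.comp_def] using this
    have h3 : HasDerivAt (fun z:ℝ => (z+1/2)^q) (q*(y+1/2)^(q-1)) y := by
      have hid : HasDerivAt (fun z:ℝ => z+1/2) 1 y := (hasDerivAt_id y).add_const (1/2)
      have := (Real.hasDerivAt_rpow_const (x := y+1/2) (p := q) (Or.inr hq1)).comp y hid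
      simpa [Function.comp_def] using this
    exact (h1.add h2).sub (h3.const_mul 2)
  have hanti : StrictAntiOn g (Set.Ici (0:ℝ)) := by
    refine strictAntiOn_of_deriv_neg (convex_Ici 0) ?_ ?_
    · exact Continuous.continuousOn (by
        have : Differentiable ℝ g := fun y => (hd y).differentiableAt
        exact this.continuous)
    · intro y hy
      rw [interior_Ici] at hy
      have hy0 : 0 < y := hy
      rw [(hd y).deriv]
      have hcm := concave_mid (p := q - 1) (by simp [hq]; linarith) (by simp [hq]; linarith) hy0
      have hq0 : 0 < q := by linarith
      nlinarith [hcm]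
  have hlt : g x < g 0 := hanti (Set.mem_Ici.2 le_rfl) (Set.mem_Ici.2 (by linarith)) (by linarith)
  have hg0 : g 0 = 1 - 2*((1/2:ℝ)^q) := by
    simp only [hg]
    rw [Real.zero_rpow (by linarith : q ≠ 0)]
    norm_num
  rw [hg0] at hlt
  exact hlt

lemma keyIneq {p : ℝ} (hp0 : 0 < p) (hp1 : p < 1) {x : ℝ} (hx : 1 ≤ x) :
    2^p * (x^(p+1) + (x+1)^(p+1)) + 1 - 2^p < (2*x+1)^(p+1) := by
  have hb : (0:ℝ) < 2^p := Real.rpow_pos_of_pos (by norm_num) p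
  have h2 : (2*x+1:ℝ)^(p+1) = 2*2^p*((x+1/2)^(p+1)) := by
    rw [show (2*x+1 : ℝ) = 2*(x+1/2) by ring,
      Real.mul_rpow (by norm_num) (by linarith : (0:ℝ) ≤ x+1/2),
      Real.rpow_add (by norm_num : (0:ℝ) < 2) p 1, Real.rpow_one]
    ring
  have h3 : (2:ℝ)^p * ((1/2:ℝ)^(p+1)) = 1/2 := by
    rw [show (1/2:ℝ) = (2:ℝ)⁻¹ by norm_num, ← Real.rpow_neg_one (2:ℝ),
      ← Real.rpow_mul (by norm_num : (0:ℝ) ≤ 2), ← Real.rpow_add (by norm_num : (0:ℝ) < 2)]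
    rw [show p + -1*(p+1) = (-1:ℝ) by ring, Real.rpow_neg_one]
  have hg := g_strict_anti hp0 hp1 hx
  have hmul := mul_lt_mul_of_pos_left hg hb
  rw [h2]
  nlinarith [hmul, h3, hb]

def Pcond (a l : ℕ) : Prop := (∃ k, l = 2^k) ∧ (a + l) % (2*l) = l

lemma Pcond_double {a l : ℕ} (hl : 1 ≤ l) : Pcond (2*a) (2*l) ↔ Pcond a l := by
  unfold Pcond
  constructor
  · rintro ⟨⟨k, hk⟩, hm⟩
    refine ⟨?_, ?_⟩
    · rcases k with _ | k
      · simp at hk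
      · exact ⟨k, by rw [pow_succ] at hk; omega⟩
    · rw [show 2*a+2*l = 2*(a+l) by ring, Nat.mul_mod_mul_left] at hm
      omega
  · rintro ⟨⟨k, hk⟩, hm⟩
    refine ⟨⟨k+1, by rw [pow_succ]; omega⟩, ?_⟩
    rw [show 2*a+2*l = 2*(a+l) by ring, Nat.mul_mod_mul_left]
    omega

lemma Pcond_not_oddA (a l : ℕ) : ¬ Pcond (2*a+1) (2*l) := by
  rintro ⟨-, hm⟩
  have h2 : (2:ℕ) ∣ 2*(2*l) := ⟨2*l, rfl⟩
  have hmm := Nat.mod_mod_of_dvd (2*a+1+2*l) h2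
  rw [hm] at hmm
  omega

lemma Pcond_not_oddL (a l' : ℕ) (hl : 1 ≤ l') : ¬ Pcond a (2*l'+1) := by
  rintro ⟨⟨k, hk⟩, -⟩
  rcases k with _ | k
  · simp at hk; omega
  · rw [pow_succ] at hk; omega

lemma cast_rpow_two_mul (p : ℝ) (l : ℕ) :
    ((2*l:ℕ):ℝ)^(p+1) = 2*2^p*((l:ℕ):ℝ)^(p+1) := by
  push_cast
  rw [Real.mul_rpow (by norm_num) (Nat.cast_nonneg l),
    Real.rpow_add (by norm_num : (0:ℝ) < 2), Real.rpow_one]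
  ring

lemma main_ind (p : ℝ) (hp0 : 0 < p) (hp1 : p < 1) :
    ∀ n a l : ℕ, a + l ≤ n → 1 ≤ l →
      Tf p a l ≤ ((l:ℕ):ℝ)^(p+1) ∧ (Tf p a l = ((l:ℕ):ℝ)^(p+1) ↔ Pcond a l) := by
  have hb : (0:ℝ) < 2^p := Real.rpow_pos_of_pos (by norm_num) p
  have hb2 : (2:ℝ)^p < 2 := by
    nth_rewrite 2 [show (2:ℝ) = (2:ℝ)^(1:ℝ) by simp]
    exact Real.rpow_lt_rpow_left_iff (by norm_num) |>.2 hp1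
  intro n
  induction n with
  | zero => intro a l h hl; omega
  | succ n ih =>
    intro a l hn hl
    by_cases hl1 : l = 1
    · -- base case l = 1
      subst hl1
      have hT : Tf p a 1 = sWeight p (a+1) - sWeight p a := by
        unfold Tf
        rw [show a+2*1 = (a+1)+1 by ring, SWeight_succ, SWeight_succ]
        ring
      obtain ⟨hle, hiff⟩ := sWeight_diff_le p hp0 hp1 a
      have hone : ((1:ℕ):ℝ)^(p+1) = 1 := by norm_num
      rw [hT, hone]
      refine ⟨hle, hiff.trans ?_⟩
      unfold Pcond
      constructor
      · intro he
        refine ⟨⟨0, rfl⟩, ?_⟩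
        obtain ⟨r, hr⟩ := he
        omega
      · rintro ⟨-, hm⟩
        rw [Nat.even_iff]
        omega
    · have hl2 : 2 ≤ l := by omega
      rcases Nat.even_or_odd l with hel | hol
      · -- l even
        obtain ⟨l', hll⟩ := hel
        have hleq : l = 2*l' := by omega
        clear hll
        subst hleq
        have hl' : 1 ≤ l' := by omega
        rcases Nat.even_or_odd a with hea | hoa
        · -- a even, l even
          obtain ⟨a', haa⟩ := hea
          have haeq : a = 2*a' := by omega
          clear haa
          subst haeq
          obtain ⟨ihle, ihiff⟩ := ih a' l' (by omega) hl'
          have hc := cast_rpow_two_mul p l'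
          rw [TI1, hc]
          constructor
          · exact mul_le_mul_of_nonneg_left ihle (by positivity)
          · exact (mul_right_inj' (by positivity)).trans (ihiff.trans (Pcond_double hl').symm)
        · -- a odd, l even
          obtain ⟨a', haa⟩ := hoa
          subst haa
          obtain ⟨ihle1, ihiff1⟩ := ih a' l' (by omega) hl'
          obtain ⟨ihle2, ihiff2⟩ := ih (a'+1) l' (by omega) hl'
          have hc := cast_rpow_two_mul p l'
          rw [TI2, hc]
          constructor
          · nlinarith
          · refine iff_of_false ?_ (Pcond_not_oddA a' l')
            intro heq
            have hsum : Tf p a' l' + Tf p (a'+1) l' = ((l':ℕ):ℝ)^(p+1) + ((l':ℕ):ℝ)^(p+1) := by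
              have := mul_left_cancel₀ (ne_of_gt hb) (by linarith [heq] : 2^p * (Tf p a' l' + Tf p (a'+1) l') = 2^p * (((l':ℕ):ℝ)^(p+1) + ((l':ℕ):ℝ)^(p+1)))
              exact this
            have he1 : Tf p a' l' = ((l':ℕ):ℝ)^(p+1) := by linarith
            have he2 : Tf p (a'+1) l' = ((l':ℕ):ℝ)^(p+1) := by linarith
            obtain ⟨-, hm1⟩ := ihiff1.1 he1
            obtain ⟨-, hm2⟩ := ihiff2.1 he2
            have hmeq : (a'+l') % (2*l') = (a'+1+l') % (2*l') := by rw [hm1, hm2]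
            have hdvd : ((2*l' : ℕ) : ℤ) ∣ ((a'+1+l' : ℕ) : ℤ) - ((a'+l' : ℕ):ℤ) :=
              Nat.ModEq.dvd hmeq
            have h1 : ((a'+1+l':ℕ):ℤ) - ((a'+l':ℕ):ℤ) = 1 := by push_cast; ring
            rw [h1] at hdvd
            have h2 := Int.le_of_dvd one_pos hdvd
            omega
      · -- l odd
        obtain ⟨l', hll⟩ := hol
        subst hll
        have hl' : 1 ≤ l' := by omega
        suffices hlt : Tf p a (2*l'+1) < ((2*l'+1:ℕ):ℝ)^(p+1) by
          exact ⟨hlt.le, iff_of_false (ne_of_lt hlt) (Pcond_not_oddL a l' hl')⟩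
        have hkey := keyIneq hp0 hp1 (x := (l':ℝ)) (by exact_mod_cast hl')
        have hcast1 : ((l'+1:ℕ):ℝ) = (l':ℝ)+1 := by push_cast; ring
        have hcastT : ((2*l'+1:ℕ):ℝ)^(p+1) = (2*(l':ℝ)+1)^(p+1) := by
          norm_cast
        rw [hcastT]
        rcases Nat.even_or_odd a with hea | hoa
        · obtain ⟨a', haa⟩ := hea
          have haeq : a = 2*a' := by omega
          clear haa
          subst haeq
          rcases Nat.even_or_odd a' with he2 | ho2
          · obtain ⟨c, hcc⟩ := he2
            have hceq : a' = 2*c := by omega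
            clear hcc
            subst hceq
            obtain ⟨ihle1, -⟩ := ih (2*c) l' (by omega) hl'
            obtain ⟨ihle2, -⟩ := ih (2*c) (l'+1) (by omega) (by omega)
            rw [show (2*(2*c) : ℕ) = 4*c by ring, TI4]
            rw [hcast1] at ihle2
            nlinarith [mul_le_mul_of_nonneg_left (add_le_add ihle1 ihle2) hb.le, hkey]
          · obtain ⟨c, hcc⟩ := ho2
            subst hcc
            obtain ⟨ihle1, -⟩ := ih (2*c) (l'+1) (by omega) (by omega)
            obtain ⟨ihle2, -⟩ := ih (2*c+2) l' (by omega) hl'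
            rw [show (2*(2*c+1) : ℕ) = 4*c+2 by ring, TI5]
            rw [hcast1] at ihle1
            nlinarith [mul_le_mul_of_nonneg_left (add_le_add ihle1 ihle2) hb.le, hkey]
        · obtain ⟨a', haa⟩ := hoa
          subst haa
          obtain ⟨ihle1, -⟩ := ih (a'+1) l' (by omega) hl'
          obtain ⟨ihle2, -⟩ := ih a' (l'+1) (by omega) (by omega)
          rw [TI3]
          rw [hcast1] at ihle2
          nlinarith [mul_le_mul_of_nonneg_left (add_le_add ihle1 ihle2) hb.le, hkey]

theorem SWeight_midpoint_eq_iff (p : ℝ) (hp0 : 0 < p) (hp1 : p < 1)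
    (m l : ℕ) (hl : 1 ≤ l) (hlm : l ≤ m) (k : ℕ)
    (hk1 : l ≤ 2 ^ k) (hk2 : 2 ^ k < 2 * l) :
    SWeight p (m + l) + SWeight p (m - l) - 2 * SWeight p m = (l:ℝ) ^ (p + 1)
      ↔ l = 2 ^ k ∧ m ≡ l [MOD 2 ^ (k + 1)] := by
  obtain ⟨-, hiff⟩ := main_ind p hp0 hp1 m (m-l) l (by omega) hl
  have e1 : m - l + 2*l = m + l := by omega
  have e2 : m - l + l = m := by omega
  unfold Tf at hiff
  rw [e1, e2] at hiff
  rw [hiff]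
  unfold Pcond
  rw [e2]
  constructor
  · rintro ⟨⟨k', hk'⟩, hm⟩
    have hkk : k' = k := by
      have h1 : k' ≤ k := (Nat.pow_le_pow_iff_right (by norm_num : 1 < 2)).1 (by omega)
      have h2 : k < k'+1 := (Nat.pow_lt_pow_iff_right (by norm_num : 1 < 2)).1
        (by rw [pow_succ]; omega)
      omega
    subst hkk
    refine ⟨hk', ?_⟩
    have h2l : 2*l = 2^(k'+1) := by rw [pow_succ]; omega
    show m % 2^(k'+1) = l % 2^(k'+1)
    rw [← h2l, Nat.mod_eq_of_lt (show l < 2*l by omega)]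
    exact hm
  · rintro ⟨hlk, hmeq⟩
    refine ⟨⟨k, hlk⟩, ?_⟩
    have h2l : 2*l = 2^(k+1) := by rw [pow_succ]; omega
    have hm' : m % (2*l) = l % (2*l) := by rw [h2l]; exact hmeq
    rw [hm', Nat.mod_eq_of_lt (show l < 2*l by omega)]
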